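/- Let f : Q → P be an integral homomorphism of fine, sharp monoids, and suppose P has a semistable structure (σ, q₀, Δ, B) over Q. Then the following are equivalent: (1) f does not split, i.e., there is no submonoid N of P with P = f(Q) × N; (2) the support of Δ has at least 2 elements; (3) every element x of σ is irreducible in P and does not lie in f(Q). -/

import Mathlib

section SemistableMonoid

variable {Q P : Type*} [AddCommMonoid Q] [AddCommMonoid P]

/-- `T·σ = Σ_x T(x)·x` for a finitely supported `T : P →₀ ℕ`. -/
def monDot (T : P →₀ ℕ) : P := T.sum fun x n => n • x

/-- A commutative monoid is sharp if `x + y = 0` implies `x = y = 0`. -/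
def MonSharp (P : Type*) [AddCommMonoid P] : Prop :=
  ∀ x y : P, x + y = 0 → x = 0 ∧ y = 0

/-- An element `x` of a sharp monoid is irreducible if `x = y + z` implies
`y = 0` or `z = 0`. -/
def MonIrreducible (x : P) : Prop := ∀ y z : P, x = y + z → y = 0 ∨ z = 0

/-- A homomorphism of monoids `f : Q → P` is integral if whenever
`f q + p = f q' + p'` there are `q₁, q₂ ∈ Q` and `p'' ∈ P` with `q + q₁ = q' + q₂`,
`p = f q₁ + p''` and `p' = f q₂ + p''`. -/
def MonIntegralHom (f : Q →+ P) : Prop :=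
  ∀ (q q' : Q) (p p' : P), f q + p = f q' + p' →
    ∃ (q₁ q₂ : Q) (p'' : P), q + q₁ = q' + q₂ ∧ p = f q₁ + p'' ∧ p' = f q₂ + p''

/-- `f : Q → P` splits if there is a submonoid `N` of `P` with `P = f(Q) × N`. -/
def MonSplits (f : Q →+ P) : Prop :=
  ∃ N : AddSubmonoid P, Function.Bijective (fun x : Q × N => f x.1 + (x.2 : P))

/-- `P` has a semistable structure `(σ, q₀, Δ, B)` over `Q` (via `f`). -/
def IsSemistableStructure (f : Q →+ P) (σ : Finset P) (q₀ : Q) (Δ B : P →₀ ℕ) : Prop :=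
  -- (S1)
  q₀ ≠ 0 ∧ Δ ≠ 0 ∧ (∀ x, Δ x ≤ 1) ∧
  ↑Δ.support ⊆ (σ : Set P) ∧ ↑B.support ⊆ (σ : Set P) ∧
  -- (S2): `P` is generated by `σ` and `f(Q)`, and `ℕ^σ → P` is injective
  (∀ p : P, ∃ (T : P →₀ ℕ) (q : Q), ↑T.support ⊆ (σ : Set P) ∧ p = monDot T + f q) ∧
  (∀ T T' : P →₀ ℕ, ↑T.support ⊆ (σ : Set P) → ↑T'.support ⊆ (σ : Set P) →
    monDot T = monDot T' → T = T') ∧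
  -- (S3)
  Disjoint Δ.support B.support ∧ monDot Δ = f q₀ + monDot B ∧
  -- (S4)
  (∀ (T T' : P →₀ ℕ) (q : Q), ↑T.support ⊆ (σ : Set P) → ↑T'.support ⊆ (σ : Set P) →
    monDot T = f q + monDot T' → q ≠ 0 → ∀ x ∈ Δ.support, 0 < T x)

end SemistableMonoid

section AuxLemmas

variable {P : Type*} [AddCommMonoid P]

lemma monDot_zero : monDot (0 : P →₀ ℕ) = 0 := Finsupp.sum_zero_index

lemma monDot_add (T T' : P →₀ ℕ) : monDot (T + T') = monDot T + monDot T' :=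
  Finsupp.sum_add_index' (fun a => zero_smul ℕ a) (fun a b₁ b₂ => add_smul b₁ b₂ a)

lemma monDot_single (x : P) (n : ℕ) : monDot (Finsupp.single x n) = n • x :=
  Finsupp.sum_single_index (zero_smul ℕ x)

lemma monDot_smul (n : ℕ) (T : P →₀ ℕ) : monDot (n • T) = n • monDot T := by
  induction n with
  | zero => simp [monDot_zero]
  | succ k ih => rw [succ_nsmul, succ_nsmul, monDot_add, ih]

lemma monDot_mem {N : AddSubmonoid P} (T : P →₀ ℕ) (h : ∀ x ∈ T.support, x ∈ N) :
    monDot T ∈ N :=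
  AddSubmonoid.sum_mem N fun x hx => AddSubmonoid.nsmul_mem N (h x hx) _

lemma support_add_subset_aux {T T' : P →₀ ℕ} {s : Set P}
    (h : ↑T.support ⊆ s) (h' : ↑T'.support ⊆ s) : ↑(T + T').support ⊆ s := by
  classical
  intro y hy
  have hy' : y ∈ T.support ∪ T'.support := Finsupp.support_add (Finset.mem_coe.mp hy)
  rcases Finset.mem_union.mp hy' with hc | hc
  · exact h hc
  · exact h' hc

lemma exists_of_mem_closure_aux {s : Finset P} {p : P}
    (h : p ∈ AddSubmonoid.closure (s : Set P)) :
    ∃ T : P →₀ ℕ, ↑T.support ⊆ (s : Set P) ∧ p = monDot T := by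
  induction h using AddSubmonoid.closure_induction with
  | mem x hx =>
    refine ⟨Finsupp.single x 1, ?_, by rw [monDot_single, one_smul]⟩
    intro y hy
    rw [Finset.mem_coe, Finsupp.mem_support_iff] at hy
    rcases eq_or_ne y x with rfl | hne
    · exact hx
    · simp [Finsupp.single_apply, (Ne.symm hne)] at hy
  | zero => exact ⟨0, by simp, monDot_zero.symm⟩
  | add a b ha hb iha ihb =>
    obtain ⟨T, hT, rfl⟩ := iha
    obtain ⟨T', hT', rfl⟩ := ihb
    exact ⟨T + T', support_add_subset_aux hT hT', (monDot_add T T').symm⟩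

end AuxLemmas

/-- Let `f : Q → P` be an integral homomorphism of fine, sharp monoids and suppose
`P` has a semistable structure `(σ, q₀, Δ, B)` over `Q`.  Then the following are
equivalent: (1) `f` does not split; (2) `Supp Δ` has at least two elements;
(3) every `x ∈ σ` is irreducible and not in `f(Q)`. -/
theorem semistable_no_split_tfae
    {Q P : Type*} [AddCancelCommMonoid Q] [AddCancelCommMonoid P]
    [AddMonoid.FG Q] [AddMonoid.FG P]
    (hQ : MonSharp Q) (hP : MonSharp P)
    (f : Q →+ P) (hf : MonIntegralHom f)
    (σ : Finset P) (q₀ : Q) (Δ B : P →₀ ℕ)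
    (hss : IsSemistableStructure f σ q₀ Δ B) :
    (¬ MonSplits f ↔ 2 ≤ Δ.support.card) ∧
    (¬ MonSplits f ↔ ∀ x ∈ σ, MonIrreducible x ∧ x ∉ Set.range f) := by
  classical
  obtain ⟨hq0, hΔne, hΔle, hΔsupp, hBsupp, hgen, hinjT, hdisj, hS3, hS4⟩ := hss
  have hsupne : Δ.support.Nonempty := Finsupp.support_nonempty_iff.mpr hΔne
  -- Step A: if `|Supp Δ| = 1`, then `f` splits.
  have stepA : Δ.support.card = 1 → MonSplits f := by
    intro hcard
    obtain ⟨x₀, hx₀⟩ := Finset.card_eq_one.mp hcard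
    have hx₀mem : x₀ ∈ Δ.support := hx₀ ▸ Finset.mem_singleton_self x₀
    have hx₀σ : x₀ ∈ σ := hΔsupp (Finset.mem_coe.mpr hx₀mem)
    have hΔeq : Δ = Finsupp.single x₀ 1 := by
      ext y
      rcases eq_or_ne y x₀ with rfl | hy
      · have h1 : Δ y ≠ 0 := Finsupp.mem_support_iff.mp hx₀mem
        have h2 := hΔle y
        rw [Finsupp.single_eq_same]
        omega
      · have hns : y ∉ Δ.support := by rw [hx₀]; simpa using hy
        rw [Finsupp.notMem_support_iff.mp hns, Finsupp.single_eq_of_ne' (Ne.symm hy)]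
    have hx₀eq : x₀ = f q₀ + monDot B := by
      rw [hΔeq, monDot_single, one_smul] at hS3; exact hS3
    have hx₀B : x₀ ∉ B.support := by
      intro hmem
      exact (Finset.disjoint_left.mp hdisj hx₀mem) hmem
    have hBsup' : ↑B.support ⊆ ((σ.erase x₀ : Finset P) : Set P) := by
      intro y hy
      have hyσ : y ∈ σ := hBsupp hy
      have hyx : y ≠ x₀ := fun h => hx₀B (h ▸ Finset.mem_coe.mp hy)
      exact Finset.mem_coe.mpr (Finset.mem_erase.mpr ⟨hyx, hyσ⟩)
    refine ⟨AddSubmonoid.closure ((σ.erase x₀ : Finset P) : Set P), ?_, ?_⟩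
    · -- injectivity
      rintro ⟨q, n⟩ ⟨q', n'⟩ hab
      simp only at hab
      obtain ⟨T, hT, hTeq⟩ := exists_of_mem_closure_aux n.2
      obtain ⟨T', hT', hT'eq⟩ := exists_of_mem_closure_aux n'.2
      have hTσ : ↑T.support ⊆ (σ : Set P) :=
        hT.trans (Finset.coe_subset.mpr (Finset.erase_subset x₀ σ))
      have hT'σ : ↑T'.support ⊆ (σ : Set P) :=
        hT'.trans (Finset.coe_subset.mpr (Finset.erase_subset x₀ σ))
      have hTx₀ : T x₀ = 0 := by
        by_contra h
        have := hT (Finset.mem_coe.mpr (Finsupp.mem_support_iff.mpr h))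
        exact (Finset.mem_erase.mp (Finset.mem_coe.mp this)).1 rfl
      have hT'x₀ : T' x₀ = 0 := by
        by_contra h
        have := hT' (Finset.mem_coe.mpr (Finsupp.mem_support_iff.mpr h))
        exact (Finset.mem_erase.mp (Finset.mem_coe.mp this)).1 rfl
      obtain ⟨q₁, q₂, p'', hqq, hp1, hp2⟩ := hf q q' ↑n ↑n' hab
      obtain ⟨S, q₃, hS, hp''⟩ := hgen p''
      have hTS : monDot T = f (q₁ + q₃) + monDot S := by
        rw [← hTeq, hp1, hp'', map_add]; abel
      have hq13 : q₁ + q₃ = 0 := by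
        by_contra hne
        have := hS4 T S (q₁ + q₃) hTσ hS hTS hne x₀ hx₀mem
        omega
      obtain ⟨hq₁0, hq₃0⟩ := hQ _ _ hq13
      have hp''T : p'' = monDot T := by
        rw [← hTeq, hp1, hq₁0, map_zero, zero_add]
      have hT'T : monDot T' = f q₂ + monDot T := by
        rw [← hT'eq, hp2, hp''T]
      have hq₂0 : q₂ = 0 := by
        by_contra hne
        have := hS4 T' T q₂ hT'σ hTσ hT'T hne x₀ hx₀mem
        omega
      have hqeq : q = q' := by
        rw [hq₁0, hq₂0, add_zero, add_zero] at hqq; exact hqq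
      have hneq : (n : P) = (n' : P) := by
        rw [hTeq, hT'eq, hT'T, hq₂0, map_zero, zero_add]
      exact Prod.ext hqeq (Subtype.ext hneq)
    · -- surjectivity
      intro p
      obtain ⟨T, q, hT, rfl⟩ := hgen p
      set n := T x₀ with hn
      have hdec : monDot T = monDot (T.erase x₀) + n • x₀ := by
        conv_lhs => rw [← Finsupp.erase_add_single x₀ T]
        rw [monDot_add, monDot_single]
      have hmem : ∀ y ∈ (T.erase x₀ + n • B).support,
          y ∈ AddSubmonoid.closure ((σ.erase x₀ : Finset P) : Set P) := by
        intro y hy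
        have hy' : y ∈ (T.erase x₀).support ∪ (n • B).support := Finsupp.support_add hy
        rcases Finset.mem_union.mp hy' with hc | hc
        · rw [Finsupp.support_erase] at hc
          have hyx : y ≠ x₀ := (Finset.mem_erase.mp hc).1
          have hyσ : y ∈ σ := hT (Finset.mem_coe.mpr (Finset.mem_of_mem_erase hc))
          exact AddSubmonoid.subset_closure
            (Finset.mem_coe.mpr (Finset.mem_erase.mpr ⟨hyx, hyσ⟩))
        · exact AddSubmonoid.subset_closure (hBsup' (Finset.mem_coe.mpr (Finsupp.support_smul hc)))
      refine ⟨(q + n • q₀, ⟨monDot (T.erase x₀ + n • B), monDot_mem _ hmem⟩), ?_⟩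
      show f (q + n • q₀) + monDot (T.erase x₀ + n • B) = monDot T + f q
      rw [monDot_add, monDot_smul, map_add, AddMonoidHom.map_nsmul, hdec, hx₀eq, smul_add]
      abel
  -- Step B : if `|Supp Δ| ≥ 2`, every `x ∈ σ` is irreducible and not in `f(Q)`.
  have stepB : 2 ≤ Δ.support.card → ∀ x ∈ σ, MonIrreducible x ∧ x ∉ Set.range f := by
    intro hcard x hxσ
    have hsing_supp : ↑(Finsupp.single x (1:ℕ)).support ⊆ (σ : Set P) := by
      rw [Finsupp.support_single_ne_zero x one_ne_zero]
      exact Finset.coe_subset.mpr (Finset.singleton_subset_iff.mpr hxσ)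
    have key : ∀ (q : Q) (T' : P →₀ ℕ), ↑T'.support ⊆ (σ : Set P) →
        x = f q + monDot T' → q = 0 := by
      intro q T' hT' hx
      by_contra hne
      have h4 := hS4 (Finsupp.single x 1) T' q hsing_supp hT'
        (by rw [monDot_single, one_smul]; exact hx) hne
      obtain ⟨a, ha, b, hb, hab⟩ := Finset.one_lt_card.mp hcard
      have hw : ∃ w ∈ Δ.support, w ≠ x := by
        rcases eq_or_ne a x with rfl | h
        · exact ⟨b, hb, fun h' => hab h'.symm⟩
        · exact ⟨a, ha, h⟩
      obtain ⟨w, hwmem, hwx⟩ := hw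
      have := h4 w hwmem
      rw [Finsupp.single_eq_of_ne' (fun h : x = w => hwx h.symm)] at this
      omega
    constructor
    · intro u v huv
      obtain ⟨T, q, hT, rfl⟩ := hgen u
      obtain ⟨T', q', hT', rfl⟩ := hgen v
      have hTT' : ↑(T + T').support ⊆ (σ : Set P) := support_add_subset_aux hT hT'
      have hx : x = f (q + q') + monDot (T + T') := by
        rw [map_add, monDot_add, huv]; abel
      have hq0 : q + q' = 0 := key _ _ hTT' hx
      obtain ⟨hq, hq'⟩ := hQ _ _ hq0
      have hxe : monDot (Finsupp.single x (1:ℕ)) = monDot (T + T') := by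
        rw [monDot_single, one_smul, hx, hq0, map_zero, zero_add]
      have heq := hinjT _ _ hsing_supp hTT' hxe
      have h1 : (1 : ℕ) = T x + T' x := by
        have := DFunLike.congr_fun heq x
        simpa [Finsupp.single_eq_same] using this
      have hother : ∀ w, w ≠ x → T w = 0 ∧ T' w = 0 := by
        intro w hwx
        have := DFunLike.congr_fun heq w
        rw [Finsupp.single_eq_of_ne' (fun h : x = w => hwx h.symm)] at this
        simp only [Finsupp.add_apply] at this
        omega
      rcases Nat.eq_zero_or_pos (T x) with hTx | hTx
      · left
        have hT0 : T = 0 := by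
          ext w
          rcases eq_or_ne w x with rfl | hwx
          · simpa using hTx
          · simpa using (hother w hwx).1
        rw [hT0, monDot_zero, hq, map_zero, add_zero]
      · right
        have hT'x : T' x = 0 := by omega
        have hT'0 : T' = 0 := by
          ext w
          rcases eq_or_ne w x with rfl | hwx
          · simpa using hT'x
          · simpa using (hother w hwx).2
        rw [hT'0, monDot_zero, hq', map_zero, add_zero]
    · rintro ⟨q, hq⟩
      have hq0 : q = 0 := key q 0 (by simp) (by rw [monDot_zero, add_zero]; exact hq.symm)
      have hx0 : x = 0 := by rw [← hq, hq0, map_zero]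
      have := hinjT (Finsupp.single x 1) 0 hsing_supp (by simp)
        (by rw [monDot_single, one_smul, monDot_zero]; exact hx0)
      have hcontra := DFunLike.congr_fun this x
      simp [Finsupp.single_eq_same] at hcontra
  -- Step C : if every `x ∈ σ` is irreducible and not in `f(Q)`, then `f` doesn't split.
  have stepC : (∀ x ∈ σ, MonIrreducible x ∧ x ∉ Set.range f) → ¬ MonSplits f := by
    rintro h3 ⟨N, hbij⟩
    have hσN : ∀ x ∈ σ, x ∈ N := by
      intro x hx
      obtain ⟨⟨q, n⟩, hqn⟩ := hbij.2 x
      simp only at hqn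
      rcases (h3 x hx).1 (f q) ↑n hqn.symm with h | h
      · rw [h, zero_add] at hqn
        rw [← hqn]; exact n.2
      · exact absurd ⟨q, by rw [h, add_zero] at hqn; exact hqn⟩ (h3 x hx).2
    have hΔN : monDot Δ ∈ N := monDot_mem _ (fun x hx => hσN x (hΔsupp (Finset.mem_coe.mpr hx)))
    have hBN : monDot B ∈ N := monDot_mem _ (fun x hx => hσN x (hBsupp (Finset.mem_coe.mpr hx)))
    have heq : f q₀ + ((⟨monDot B, hBN⟩ : N) : P) = f 0 + ((⟨monDot Δ, hΔN⟩ : N) : P) := by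
      rw [map_zero, zero_add]; exact hS3.symm
    have := hbij.1 (a₁ := (q₀, ⟨monDot B, hBN⟩)) (a₂ := (0, ⟨monDot Δ, hΔN⟩)) heq
    exact hq0 (congrArg Prod.fst this)
  -- Assemble the equivalences.
  have hone : 1 ≤ Δ.support.card := Finset.card_pos.mpr hsupne
  constructor
  · constructor
    · intro hns
      by_contra hlt
      push_neg at hlt
      exact hns (stepA (by omega))
    · intro h2 hs
      exact stepC (stepB h2) hs
  · constructor
    · intro hns
      apply stepB
      by_contra hlt
      push_neg at hlt
      exact hns (stepA (by omega))
    · exact fun h3 => stepC h3
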